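/- Let λ₁,…,λ_m be real numbers with H_1,…,H_p > 0 (normalized elementary symmetric functions). If 1 ≤ i < j ≤ p and H_{i-1} H_j = H_{j-1} H_i, then λ₁ = λ₂ = ⋯ = λ_m. -/

import Mathlib

open Finset

/-- The `k`-th elementary symmetric polynomial of `λ₁,…,λ_m`. -/
noncomputable def esymm (m k : ℕ) (lam : Fin m → ℝ) : ℝ :=
  ∑ s ∈ (Finset.univ : Finset (Fin m)).powersetCard k, ∏ i ∈ s, lam i

/-- The `k`-th elementary symmetric polynomial of the `m−1` variables with `λ_l` omitted. -/
noncomputable def esymmOmit (m k : ℕ) (lam : Fin m → ℝ) (l : Fin m) : ℝ :=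
  ∑ s ∈ ((Finset.univ : Finset (Fin m)).erase l).powersetCard k, ∏ i ∈ s, lam i

/-- Normalized `k`-th elementary symmetric function `H_k = σ_k / C(m,k)`. -/
noncomputable def Hk (m k : ℕ) (lam : Fin m → ℝ) : ℝ := esymm m k lam / (m.choose k)

/-- Normalized `k`-th elementary symmetric function of the tuple with `λ_l` omitted. -/
noncomputable def HkOmit (m k : ℕ) (lam : Fin m → ℝ) (l : Fin m) : ℝ :=
  esymmOmit m k lam l / ((m - 1).choose k)

namespace NMaux
open Polynomial

noncomputable def H (s : Multiset ℝ) (k : ℕ) : ℝ :=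
  s.esymm k / ((Multiset.card s).choose k)

lemma esymm_zero' (s : Multiset ℝ) : s.esymm 0 = 1 := by
  simp [Multiset.esymm]

lemma esymm_one' (s : Multiset ℝ) : s.esymm 1 = s.sum := by
  simp [Multiset.esymm, Multiset.powersetCard_one, Multiset.map_map, Function.comp_def]

lemma esymm_of_lt (s : Multiset ℝ) {k : ℕ} (h : Multiset.card s < k) : s.esymm k = 0 := by
  simp [Multiset.esymm, Multiset.powersetCard_eq_empty _ h]

lemma esymm_cons (a : ℝ) (s : Multiset ℝ) (k : ℕ) :
    (a ::ₘ s).esymm (k + 1) = s.esymm (k + 1) + a * s.esymm k := by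
  unfold Multiset.esymm
  rw [Multiset.powersetCard_cons, Multiset.map_add, Multiset.sum_add, Multiset.map_map]
  congr 1
  rw [← Multiset.sum_map_mul_left]
  exact congrArg _ (Multiset.map_congr rfl fun t ht => by simp [Multiset.prod_cons])

lemma esymm_card (s : Multiset ℝ) : s.esymm (Multiset.card s) = s.prod := by
  induction s using Multiset.induction with
  | empty => simp [esymm_zero']
  | cons a s ih =>
      rw [Multiset.card_cons, esymm_cons, esymm_of_lt s (Nat.lt_succ_self _), ih,
        Multiset.prod_cons, zero_add]

lemma H_zero (s : Multiset ℝ) : H s 0 = 1 := by simp [H, esymm_zero']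

lemma H_one (s : Multiset ℝ) : H s 1 = s.sum / (Multiset.card s : ℝ) := by
  simp [H, esymm_one']

lemma two_esymm_two (s : Multiset ℝ) :
    2 * s.esymm 2 = s.sum ^ 2 - (s.map fun y => y ^ 2).sum := by
  induction s using Multiset.induction with
  | empty =>
      have : Multiset.card (0 : Multiset ℝ) < 2 := by simp
      simp [esymm_of_lt _ this]
  | cons a s ih =>
      have h2 : (a ::ₘ s).esymm 2 = s.esymm 2 + a * s.esymm 1 := esymm_cons a s 1
      rw [h2, esymm_one', Multiset.sum_cons, Multiset.map_cons, Multiset.sum_cons]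
      nlinarith [ih]

noncomputable def SS (s : Multiset ℝ) : ℝ :=
  (s.map fun x => (s.map fun y => (x - y) ^ 2).sum).sum

lemma sum_quadratic (s : Multiset ℝ) (A B C : ℝ) :
    (s.map fun x => A * x ^ 2 + B * x + C).sum
      = A * (s.map fun y => y ^ 2).sum + B * s.sum + (Multiset.card s : ℝ) * C := by
  induction s using Multiset.induction with
  | empty => simp
  | cons a s ih => simp [ih]; push_cast; ring

lemma inner_sum (s : Multiset ℝ) (x : ℝ) :
    (s.map fun y => (x - y) ^ 2).sum
      = (Multiset.card s : ℝ) * x ^ 2 - 2 * s.sum * x + (s.map fun y => y ^ 2).sum := by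
  have : (s.map fun y => (x - y) ^ 2) = s.map fun y => 1 * y ^ 2 + (-2 * x) * y + x ^ 2 :=
    Multiset.map_congr rfl fun y _ => by ring
  rw [this, sum_quadratic]; ring

lemma SS_eq (s : Multiset ℝ) :
    SS s = 2 * ((Multiset.card s : ℝ) * (s.map fun y => y ^ 2).sum - s.sum ^ 2) := by
  unfold SS
  rw [Multiset.map_congr rfl fun x _ => inner_sum s x]
  have : (s.map fun x => (Multiset.card s : ℝ) * x ^ 2 - 2 * s.sum * x
        + (s.map fun y => y ^ 2).sum)
      = s.map fun x => (Multiset.card s : ℝ) * x ^ 2 + (-(2 * s.sum)) * x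
        + (s.map fun y => y ^ 2).sum :=
    Multiset.map_congr rfl fun y _ => by ring
  rw [this, sum_quadratic]; ring

lemma SS_nonneg (s : Multiset ℝ) : 0 ≤ SS s := by
  refine Multiset.sum_nonneg fun t ht => ?_
  obtain ⟨x, -, rfl⟩ := Multiset.mem_map.mp ht
  exact Multiset.sum_nonneg fun u hu => by
    obtain ⟨y, -, rfl⟩ := Multiset.mem_map.mp hu; positivity

lemma pair_le_SS (s : Multiset ℝ) {a b : ℝ} (ha : a ∈ s) (hb : b ∈ s) :
    (a - b) ^ 2 ≤ SS s := by
  have h1 : (a - b) ^ 2 ≤ (s.map fun y => (a - y) ^ 2).sum :=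
    Multiset.single_le_sum (fun u hu => by
      obtain ⟨y, -, rfl⟩ := Multiset.mem_map.mp hu; positivity) _
      (Multiset.mem_map_of_mem _ hb)
  refine h1.trans (Multiset.single_le_sum (fun u hu => ?_) _
    (Multiset.mem_map_of_mem _ ha))
  obtain ⟨x, -, rfl⟩ := Multiset.mem_map.mp hu
  exact Multiset.sum_nonneg fun u hu => by
    obtain ⟨y, -, rfl⟩ := Multiset.mem_map.mp hu; positivity

lemma SS_eq_zero (s : Multiset ℝ) (h : ∀ a ∈ s, ∀ b ∈ s, a = b) : SS s = 0 := by
  refine Multiset.sum_eq_zero fun t ht => ?_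
  obtain ⟨x, hx, rfl⟩ := Multiset.mem_map.mp ht
  refine Multiset.sum_eq_zero fun u hu => ?_
  obtain ⟨y, hy, rfl⟩ := Multiset.mem_map.mp hu
  rw [h x hx y hy]; ring

lemma H_sq_sub (s : Multiset ℝ) (h2 : 2 ≤ Multiset.card s) :
    H s 1 ^ 2 - H s 2 =
      ((Multiset.card s : ℝ) * (s.map fun y => y ^ 2).sum - s.sum ^ 2) /
        ((Multiset.card s : ℝ) ^ 2 * ((Multiset.card s : ℝ) - 1)) := by
  have hn2 : (2 : ℝ) ≤ (Multiset.card s : ℝ) := by exact_mod_cast h2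
  have hn0 : (Multiset.card s : ℝ) ≠ 0 := by linarith
  have hn1 : (Multiset.card s : ℝ) - 1 ≠ 0 := by linarith
  have he2 : s.esymm 2 = (s.sum ^ 2 - (s.map fun y => y ^ 2).sum) / 2 := by
    linarith [two_esymm_two s]
  rw [H_one, H, Nat.cast_choose_two, he2]
  field_simp
  ring

lemma H_var_le (s : Multiset ℝ) (h2 : 2 ≤ Multiset.card s) : H s 2 ≤ H s 1 ^ 2 := by
  have hn2 : (2 : ℝ) ≤ (Multiset.card s : ℝ) := by exact_mod_cast h2
  have h := H_sq_sub s h2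
  have hv : 0 ≤ (Multiset.card s : ℝ) * (s.map fun y => y ^ 2).sum - s.sum ^ 2 := by
    nlinarith [SS_nonneg s, SS_eq s]
  nlinarith [div_nonneg hv
    (by nlinarith : (0:ℝ) ≤ (Multiset.card s : ℝ) ^ 2 * ((Multiset.card s : ℝ) - 1))]

lemma H_var_eq (s : Multiset ℝ) (h2 : 2 ≤ Multiset.card s) (heq : H s 1 ^ 2 = H s 2) :
    ∀ a ∈ s, ∀ b ∈ s, a = b := by
  have hn2 : (2 : ℝ) ≤ (Multiset.card s : ℝ) := by exact_mod_cast h2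
  have h := H_sq_sub s h2
  rw [heq, sub_self] at h
  have hd : (Multiset.card s : ℝ) ^ 2 * ((Multiset.card s : ℝ) - 1) ≠ 0 := by nlinarith
  have hv : (Multiset.card s : ℝ) * (s.map fun y => y ^ 2).sum - s.sum ^ 2 = 0 := by
    rw [eq_comm, div_eq_zero_iff] at h
    rcases h with h | h
    · exact h
    · exact absurd h hd
  have hSS : SS s = 0 := by rw [SS_eq, hv]; ring
  intro a ha b hb
  have := pair_le_SS s ha hb
  have h0 : (a - b) ^ 2 = 0 := le_antisymm (by linarith) (by positivity)
  have := pow_eq_zero_iff (n := 2) (by norm_num) |>.mp h0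
  linarith [sub_eq_zero.mp this]

lemma H_var_of_const (s : Multiset ℝ) (h2 : 2 ≤ Multiset.card s)
    (h : ∀ a ∈ s, ∀ b ∈ s, a = b) : H s 1 ^ 2 = H s 2 := by
  have hn2 : (2 : ℝ) ≤ (Multiset.card s : ℝ) := by exact_mod_cast h2
  have hSS := SS_eq_zero s h
  rw [SS_eq] at hSS
  have hs := H_sq_sub s h2
  have : (Multiset.card s : ℝ) * (s.map fun y => y ^ 2).sum - s.sum ^ 2 = 0 := by linarith
  rw [this, zero_div] at hs
  linarith

lemma deriv_step (s : Multiset ℝ) (h2 : 2 ≤ Multiset.card s) :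
    ∃ μ : Multiset ℝ, Multiset.card μ = Multiset.card s - 1 ∧
      ∀ j ≤ Multiset.card s - 1, H μ j = H s j := by
  set n := Multiset.card s with hn
  set p : ℝ[X] := (s.map fun a => X - C a).prod with hp
  have hmonic : p.Monic :=
    monic_multiset_prod_of_monic _ _ fun a _ => monic_X_sub_C a
  have hdeg : p.natDegree = n := natDegree_multiset_prod_X_sub_C_eq_card s
  have hroots : p.roots = s := roots_multiset_prod_X_sub_C s
  set q : ℝ[X] := derivative p with hq
  have hcard_ge : n ≤ Multiset.card q.roots + 1 := by
    have := p.card_roots_le_derivative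
    rwa [hroots, ← hn, ← hq] at this
  have hqdeg_le : q.natDegree ≤ n - 1 := by
    have := natDegree_derivative_le p
    rwa [hdeg] at this
  have hcard' : Multiset.card q.roots ≤ q.natDegree := q.card_roots'
  have hqdeg : q.natDegree = n - 1 := by omega
  have hcardroots : Multiset.card q.roots = q.natDegree := by omega
  refine ⟨q.roots, by omega, fun j hj => ?_⟩
  have hjn : j ≤ n := le_trans hj (Nat.sub_le _ _)
  have hlead : q.leadingCoeff = (n : ℝ) := by
    have h1 : q.coeff (n - 1) = p.coeff (n - 1 + 1) * ((n - 1 : ℕ) + 1 : ℝ) :=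
      coeff_derivative p (n - 1)
    have hsub : n - 1 + 1 = n := by omega
    rw [hsub] at h1
    rw [Polynomial.leadingCoeff, hqdeg, h1, show p.coeff n = 1 by
      rw [← hdeg]; exact hmonic.coeff_natDegree]
    push_cast [Nat.cast_sub (by omega : 1 ≤ n)]
    ring
  have hA := Polynomial.coeff_eq_esymm_roots_of_card hcardroots
    (show n - 1 - j ≤ q.natDegree by omega)
  rw [hqdeg, show n - 1 - (n - 1 - j) = j by omega, hlead] at hA
  have hB : q.coeff (n - 1 - j) = p.coeff (n - j) * ((n - 1 - j : ℕ) + 1 : ℝ) := by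
    have := coeff_derivative p (n - 1 - j)
    rwa [show n - 1 - j + 1 = n - j by omega] at this
  have hC : p.coeff (n - j) = (-1) ^ j * s.esymm j := by
    have := Multiset.prod_X_sub_C_coeff s (show n - j ≤ Multiset.card s by omega)
    rwa [← hn, show n - (n - j) = j by omega] at this
  have hcast : ((n - 1 - j : ℕ) + 1 : ℝ) = (n : ℝ) - (j : ℝ) := by
    push_cast [Nat.cast_sub (by omega : j ≤ n - 1), Nat.cast_sub (by omega : 1 ≤ n)]
    ring
  have hkey : (n : ℝ) * q.roots.esymm j = ((n : ℝ) - (j : ℝ)) * s.esymm j := by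
    have := hA.symm.trans hB
    rw [hC, hcast] at this
    have hne : ((-1 : ℝ)) ^ j ≠ 0 := by positivity
    have h3 : (-1 : ℝ) ^ j * ((n : ℝ) * q.roots.esymm j)
        = (-1 : ℝ) ^ j * (((n : ℝ) - (j : ℝ)) * s.esymm j) := by linear_combination this
    exact mul_left_cancel₀ hne h3
  have hid : (((n - 1).choose j : ℕ) : ℝ) * (n : ℝ)
      = ((n.choose j : ℕ) : ℝ) * ((n : ℝ) - (j : ℝ)) := by
    have hnat := Nat.choose_mul_succ_eq (n - 1) j
    rw [show n - 1 + 1 = n by omega] at hnat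
    have : (((n - 1).choose j * n : ℕ) : ℝ) = ((n.choose j * (n - j) : ℕ) : ℝ) := by
      exact_mod_cast congrArg (Nat.cast (R := ℝ)) hnat
    push_cast [Nat.cast_sub hjn] at this
    linarith
  have hch1 : (0 : ℝ) < (((n - 1).choose j : ℕ) : ℝ) := by
    exact_mod_cast Nat.choose_pos hj
  have hch2 : (0 : ℝ) < ((n.choose j : ℕ) : ℝ) := by
    exact_mod_cast Nat.choose_pos hjn
  rw [H, H, hcardroots, hqdeg, ← hn, div_eq_div_iff (by positivity) (by positivity)]
  have hn0 : (n : ℝ) ≠ 0 := by positivity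
  apply mul_left_cancel₀ hn0
  linear_combination ((n.choose j : ℕ) : ℝ) * hkey - s.esymm j * hid

lemma esymm_rev (s : Multiset ℝ) (h0 : ∀ x ∈ s, x ≠ 0) :
    ∀ j, j ≤ Multiset.card s →
      (s.map fun x => x⁻¹).esymm j * s.prod = s.esymm (Multiset.card s - j) := by
  induction s using Multiset.induction with
  | empty =>
      intro j hj
      simp only [Multiset.card_zero, Nat.le_zero] at hj
      subst hj
      simp [esymm_zero']
  | cons a s ih =>
      intro j hj
      have ha : a ≠ 0 := h0 a (Multiset.mem_cons_self a s)
      have h0' : ∀ x ∈ s, x ≠ 0 := fun x hx => h0 x (Multiset.mem_cons_of_mem hx)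
      rw [Multiset.card_cons] at hj ⊢
      match j with
      | 0 =>
          rw [esymm_zero', one_mul, Nat.sub_zero, ← Multiset.card_cons a s, esymm_card]
      | (j' + 1) =>
          rw [Multiset.map_cons, esymm_cons, Multiset.prod_cons]
          rcases Nat.lt_or_ge j' (Multiset.card s) with hlt | hge
          · have e1 := ih h0' (j' + 1) hlt
            have e2 := ih h0' j' hlt.le
            have hsub : Multiset.card s + 1 - (j' + 1) = (Multiset.card s - (j' + 1)) + 1 := by
              omega
            rw [hsub, esymm_cons]
            have hsub2 : Multiset.card s - (j' + 1) + 1 = Multiset.card s - j' := by omega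
            rw [hsub2]
            have hinv : a⁻¹ * a = 1 := inv_mul_cancel₀ ha
            linear_combination a * e1 + e2 + (s.prod * ((s.map fun x => x⁻¹).esymm j')) * hinv
          · have hj' : j' = Multiset.card s := by omega
            subst hj'
            have hzero : ((s.map fun x => x⁻¹).esymm (Multiset.card s + 1)) = 0 :=
              esymm_of_lt _ (by simp)
            have hcs : (s.map fun x => x⁻¹).esymm (Multiset.card s)
                = (s.map fun x => x⁻¹).prod := by
              have := esymm_card (s.map fun x => x⁻¹)
              rwa [Multiset.card_map] at this
            rw [hzero, hcs, Multiset.prod_map_inv, Nat.sub_self, esymm_zero', zero_add]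
            have hprod : s.prod ≠ 0 :=
              Multiset.prod_ne_zero (fun h => h0' 0 h rfl)
            field_simp
            simp [hprod]

lemma H_rev (s : Multiset ℝ) (h0 : ∀ x ∈ s, x ≠ 0) {j : ℕ} (hj : j ≤ Multiset.card s) :
    H s (Multiset.card s - j) = H (s.map fun x => x⁻¹) j * s.prod := by
  rw [H, H, Multiset.card_map, Nat.choose_symm hj, ← esymm_rev s h0 j hj]
  ring

lemma newton_base (s : Multiset ℝ) (k : ℕ) (hcard : Multiset.card s = k + 2) :
    H s k * H s (k + 2) ≤ H s (k + 1) ^ 2 := by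
  by_cases h : ∃ x ∈ s, x = 0
  · obtain ⟨x, hx, rfl⟩ := h
    have : H s (k + 2) = 0 := by
      rw [← hcard, H, esymm_card, Multiset.prod_eq_zero hx, zero_div]
    rw [this, mul_zero]
    positivity
  · push_neg at h
    set μ := s.map fun x => x⁻¹ with hμ
    have hc2 : Multiset.card μ = k + 2 := by rw [hμ, Multiset.card_map, hcard]
    have e2 : H s k = H μ 2 * s.prod := by
      have := H_rev s h (j := 2) (by omega)
      rwa [hcard, show k + 2 - 2 = k by omega] at this
    have e1 : H s (k + 1) = H μ 1 * s.prod := by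
      have := H_rev s h (j := 1) (by omega)
      rwa [hcard, show k + 2 - 1 = k + 1 by omega] at this
    have e0 : H s (k + 2) = s.prod := by
      have := H_rev s h (j := 0) (by omega)
      rwa [hcard, Nat.sub_zero, H_zero, one_mul] at this
    rw [e2, e1, e0]
    have := H_var_le μ (by omega)
    nlinarith [sq_nonneg s.prod]

lemma newton_base_eq (s : Multiset ℝ) (k : ℕ) (hcard : Multiset.card s = k + 2)
    (hpos2 : 0 < H s (k + 2)) (heq : H s k * H s (k + 2) = H s (k + 1) ^ 2) :
    ∀ a ∈ s, ∀ b ∈ s, a = b := by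
  have hprod : H s (k + 2) = s.prod := by
    rw [← hcard, H, esymm_card, hcard]; simp
  have h : ∀ x ∈ s, x ≠ 0 := by
    intro x hx hx0
    rw [hprod, Multiset.prod_eq_zero (hx0 ▸ hx)] at hpos2
    exact lt_irrefl 0 hpos2
  set μ := s.map fun x => x⁻¹ with hμ
  have hc2 : Multiset.card μ = k + 2 := by rw [hμ, Multiset.card_map, hcard]
  have e2 : H s k = H μ 2 * s.prod := by
    have := H_rev s h (j := 2) (by omega)
    rwa [hcard, show k + 2 - 2 = k by omega] at this
  have e1 : H s (k + 1) = H μ 1 * s.prod := by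
    have := H_rev s h (j := 1) (by omega)
    rwa [hcard, show k + 2 - 1 = k + 1 by omega] at this
  have hpne : s.prod ≠ 0 := by rw [← hprod]; exact ne_of_gt hpos2
  have hvar : H μ 1 ^ 2 = H μ 2 := by
    rw [e2, e1, hprod] at heq
    have h2 : H μ 2 * (s.prod * s.prod) = H μ 1 ^ 2 * (s.prod * s.prod) := by
      linear_combination heq
    exact (mul_right_cancel₀ (mul_ne_zero hpne hpne) h2).symm
  intro a ha b hb
  have := H_var_eq μ (by omega) hvar a⁻¹ (Multiset.mem_map_of_mem _ ha)
    b⁻¹ (Multiset.mem_map_of_mem _ hb)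
  exact inv_injective this

theorem newton_ineq (k n : ℕ) (hn : k + 2 ≤ n) :
    ∀ s : Multiset ℝ, Multiset.card s = n → H s k * H s (k + 2) ≤ H s (k + 1) ^ 2 := by
  induction n, hn using Nat.le_induction with
  | base => exact fun s hs => newton_base s k hs
  | succ n hn ih =>
      intro s hs
      obtain ⟨μ, hμc, hμH⟩ := deriv_step s (by omega)
      rw [hs] at hμc hμH
      have e0 := hμH k (by omega)
      have e1 := hμH (k + 1) (by omega)
      have e2 := hμH (k + 2) (by omega)
      rw [← e0, ← e1, ← e2]
      exact ih μ (by omega)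

theorem newton_eq (k n : ℕ) (hn : k + 2 ≤ n) :
    ∀ s : Multiset ℝ, Multiset.card s = n → 0 < H s (k + 2) →
      H s k * H s (k + 2) = H s (k + 1) ^ 2 → ∀ a ∈ s, ∀ b ∈ s, a = b := by
  induction n, hn using Nat.le_induction with
  | base => exact fun s hs => newton_base_eq s k hs
  | succ n hn ih =>
      intro s hs hpos2 heq
      obtain ⟨μ, hμc, hμH⟩ := deriv_step s (by omega)
      rw [hs] at hμc hμH
      have e0 := hμH k (by omega)
      have e1 := hμH (k + 1) (by omega)
      have e2 := hμH (k + 2) (by omega)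
      have hμconst := ih μ (by omega) (by rw [e2]; exact hpos2)
        (by rw [e0, e1, e2]; exact heq)
      have hvarμ : H μ 1 ^ 2 = H μ 2 := H_var_of_const μ (by omega) hμconst
      have f1 := hμH 1 (by omega)
      have f2 := hμH 2 (by omega)
      have hvars : H s 1 ^ 2 = H s 2 := by rw [← f1, ← f2]; exact hvarμ
      exact H_var_eq s (by omega) hvars

lemma ratio_chain (r : ℕ → ℝ) (a : ℕ) :
    ∀ d, (∀ k, a ≤ k → k < a + d → r (k + 1) ≤ r k) → r (a + d) ≤ r a := by
  intro d
  induction d with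
  | zero => intro _; simp
  | succ d ihd =>
      intro h
      have h1 : r (a + d + 1) ≤ r (a + d) := h (a + d) (by omega) (by omega)
      have h2 := ihd fun k hk hk' => h k hk (by omega)
      calc r (a + (d + 1)) = r (a + d + 1) := by ring_nf
        _ ≤ r (a + d) := h1
        _ ≤ r a := h2

end NMaux

/-- Equality case of Newton–Maclaurin: equality forces all λ's equal. -/
theorem newton_maclaurin_equality (m p : ℕ) (lam : Fin m → ℝ)
    (hpos : ∀ k, 1 ≤ k → k ≤ p → 0 < Hk m k lam)
    (i j : ℕ) (hi : 1 ≤ i) (hij : i < j) (hjp : j ≤ p)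
    (heq : Hk m (i - 1) lam * Hk m j lam = Hk m (j - 1) lam * Hk m i lam) :
    ∀ a b : Fin m, lam a = lam b := by
  intro a b
  set s : Multiset ℝ := (Finset.univ : Finset (Fin m)).val.map lam with hs
  have hcard : Multiset.card s = m := by simp [hs]
  have hbridge : ∀ k, Hk m k lam = NMaux.H s k := by
    intro k
    rw [Hk, NMaux.H, hcard, hs, Finset.esymm_map_val]
    rfl
  have hjm : j ≤ m := by
    by_contra hc
    push_neg at hc
    have hzero : Hk m j lam = 0 := by
      rw [hbridge j, NMaux.H, NMaux.esymm_of_lt s (by omega), zero_div]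
    have := hpos j (by omega) hjp
    rw [hzero] at this
    exact lt_irrefl 0 this
  obtain ⟨i', rfl⟩ : ∃ i', i = i' + 1 := ⟨i - 1, by omega⟩
  obtain ⟨j', rfl⟩ : ∃ j', j = j' + 1 := ⟨j - 1, by omega⟩
  simp only [Nat.add_sub_cancel] at heq
  rw [hbridge, hbridge, hbridge, hbridge] at heq
  have hpos' : ∀ k, k ≤ j' + 1 → 0 < NMaux.H s k := by
    intro k hk
    match k with
    | 0 => rw [NMaux.H_zero]; norm_num
    | (k + 1) => rw [← hbridge]; exact hpos (k + 1) (by omega) (by omega)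
  set r : ℕ → ℝ := fun k => NMaux.H s (k + 1) / NMaux.H s k with hr
  have hstep : ∀ k, k + 2 ≤ j' + 1 → r (k + 1) ≤ r k := by
    intro k hk
    have hN := NMaux.newton_ineq k m (by omega) s hcard
    have p0 := hpos' k (by omega)
    have p1 := hpos' (k + 1) (by omega)
    rw [hr]
    simp only
    rw [div_le_div_iff₀ p1 p0]
    nlinarith [hN]
  have hreq : r j' = r i' := by
    rw [hr]
    simp only
    rw [div_eq_div_iff (ne_of_gt (hpos' j' (by omega))) (ne_of_gt (hpos' i' (by omega)))]
    linear_combination heq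
  have h1 : r (i' + 1) ≤ r i' := hstep i' (by omega)
  have h2 : r j' ≤ r (i' + 1) := by
    have := NMaux.ratio_chain r (i' + 1) (j' - (i' + 1))
      (fun k hk hk' => hstep k (by omega))
    rwa [show i' + 1 + (j' - (i' + 1)) = j' by omega] at this
  have hre : r (i' + 1) = r i' := le_antisymm h1 (by rw [← hreq]; exact h2)
  have heqH : NMaux.H s i' * NMaux.H s (i' + 2) = NMaux.H s (i' + 1) ^ 2 := by
    have p0 := hpos' i' (by omega)
    have p1 := hpos' (i' + 1) (by omega)
    rw [hr] at hre
    simp only at hre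
    rw [div_eq_div_iff (ne_of_gt p1) (ne_of_gt p0)] at hre
    linear_combination hre
  have hall := NMaux.newton_eq i' m (by omega) s hcard (hpos' (i' + 2) (by omega)) heqH
  exact hall (lam a) (Multiset.mem_map_of_mem _ (Finset.mem_univ_val _))
    (lam b) (Multiset.mem_map_of_mem _ (Finset.mem_univ_val _))
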